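/- Fix a femtocell user k and another user j ≠ k, and fix the transmit powers of all users other than k and j. Suppose p_k ≤ p_k' and p_j ≤ p_j' are powers in the feasible intervals such that for every power vector q in the rectangle [p_k, p_k'] × [p_j, p_j'] (with the other coordinates fixed) one has γ_k(q)·q_k ≥ p_a. Then the payoff u_k has increasing differences in (p_k, p_j): u_k(p_k', p_j') − u_k(p_k, p_j') ≥ u_k(p_k', p_j) − u_k(p_k, p_j). (This is Theorem 1: given the MBS prices, the follower subgame is a supermodular game whenever γ_k ≥ p_a/p_k.) -/

import Mathlib

open Real Finset

/-- SINR of FU `k`: `γ_k(p) = h_{k,k} p_k / (N_k + h_{0,k} p_0 + Σ_{j≠k} h_{j,k} p_j)`. -/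
noncomputable def sinr {K : ℕ} (hff : Fin K → Fin K → ℝ) (h0f N : Fin K → ℝ)
    (p0 : ℝ) (k : Fin K) (p : Fin K → ℝ) : ℝ :=
  hff k k * p k / (N k + h0f k * p0 + ∑ j ∈ Finset.univ.erase k, hff j k * p j)

/-- Net payoff of FU `k`: `u_k(p) = W·log(1 + γ_k(p))/(p_k + p_a) − λ_k h_{k,0} p_k`. -/
noncomputable def payoff {K : ℕ} (W pa p0 : ℝ) (hff : Fin K → Fin K → ℝ)
    (h0f hf0 N lam : Fin K → ℝ) (k : Fin K) (p : Fin K → ℝ) : ℝ :=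
  W * Real.log (1 + sinr hff h0f N p0 k p) / (p k + pa) - lam k * hf0 k * p k

lemma key_aux (W pa h b D pk pk' pj pj' : ℝ) (hW : 0 < W) (hpa : 0 < pa) (hh : 0 < h)
    (hb : 0 < b) (hD : 0 < D) (hpk0 : 0 ≤ pk) (hpkle : pk ≤ pk') (hpj0 : 0 ≤ pj)
    (hpjle : pj ≤ pj')
    (hcond : ∀ y ∈ Set.Icc pj pj', pa * (D + b * y) ≤ h * pk ^ 2) :
    W * (Real.log (D + b * pj' + h * pk') - Real.log (D + b * pj')) / (pk' + pa) -
        W * (Real.log (D + b * pj' + h * pk) - Real.log (D + b * pj')) / (pk + pa) ≥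
      W * (Real.log (D + b * pj + h * pk') - Real.log (D + b * pj)) / (pk' + pa) -
        W * (Real.log (D + b * pj + h * pk) - Real.log (D + b * pj)) / (pk + pa) := by
  have hpk'0 : 0 ≤ pk' := le_trans hpk0 hpkle
  set g : ℝ → ℝ := fun y =>
    W * (Real.log (D + b * y + h * pk') - Real.log (D + b * y)) / (pk' + pa) -
      W * (Real.log (D + b * y + h * pk) - Real.log (D + b * y)) / (pk + pa) with hg
  set g' : ℝ → ℝ := fun y =>
    W * (b / (D + b * y + h * pk') - b / (D + b * y)) / (pk' + pa) -
      W * (b / (D + b * y + h * pk) - b / (D + b * y)) / (pk + pa) with hg'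
  have hA : ∀ y : ℝ, 0 ≤ y → 0 < D + b * y := fun y hy => by positivity
  have hlin : ∀ (c y : ℝ), HasDerivAt (fun y => D + b * y + c) b y := by
    intro c y
    have h1 : HasDerivAt (fun y : ℝ => b * y) b y := by
      simpa using (hasDerivAt_id y).const_mul b
    simpa using (h1.const_add D).add_const c
  have hlog : ∀ (c y : ℝ), 0 ≤ c → 0 ≤ y →
      HasDerivAt (fun y => Real.log (D + b * y + c)) (b / (D + b * y + c)) y := by
    intro c y hc hy
    exact (hlin c y).log (by positivity)
  have hlog0 : ∀ y : ℝ, 0 ≤ y →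
      HasDerivAt (fun y => Real.log (D + b * y)) (b / (D + b * y)) y := by
    intro y hy
    have := hlog 0 y le_rfl hy
    simpa using this
  have hd : ∀ y : ℝ, 0 ≤ y → HasDerivAt g (g' y) y := by
    intro y hy
    exact ((((hlog (h * pk') y (by positivity) hy).sub (hlog0 y hy)).const_mul W).div_const
      (pk' + pa)).sub ((((hlog (h * pk) y (by positivity) hy).sub (hlog0 y hy)).const_mul
      W).div_const (pk + pa))
  have hmono : MonotoneOn g (Set.Icc pj pj') := by
    apply monotoneOn_of_deriv_nonneg (convex_Icc pj pj')
    · intro y hy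
      exact ((hd y (le_trans hpj0 hy.1)).continuousAt).continuousWithinAt
    · intro y hy
      rw [interior_Icc] at hy
      exact ((hd y (le_trans hpj0 hy.1.le)).differentiableAt).differentiableWithinAt
    · intro y hy
      rw [interior_Icc] at hy
      have hy0 : 0 ≤ y := le_trans hpj0 hy.1.le
      rw [(hd y hy0).deriv]
      -- show 0 ≤ g' y
      set A := D + b * y with hAdef
      have hApos : 0 < A := hA y hy0
      have hpaA : pa * A ≤ h * pk ^ 2 := hcond y ⟨hy.1.le, hy.2.le⟩
      have hstep : pa * A ≤ h * pk * pk' := by nlinarith [mul_nonneg (mul_nonneg hh.le hpk0) (sub_nonneg.2 hpkle)]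
      have hineq : pk' * ((pk + pa) * (A + h * pk)) ≤ pk * ((pk' + pa) * (A + h * pk')) := by
        nlinarith [mul_nonneg (sub_nonneg.2 hpkle) (sub_nonneg.2 hstep)]
      have h1 : 0 < A + h * pk := by positivity
      have h2 : 0 < A + h * pk' := by positivity
      have hrw : g' y = W * b * h *
          (pk / ((pk + pa) * A * (A + h * pk)) - pk' / ((pk' + pa) * A * (A + h * pk'))) := by
        simp only [hg']
        field_simp
        ring
      rw [hrw]
      have hfr : pk' / ((pk' + pa) * A * (A + h * pk')) ≤ pk / ((pk + pa) * A * (A + h * pk)) := by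
        rw [div_le_div_iff₀ (by positivity) (by positivity)]
        nlinarith [mul_le_mul_of_nonneg_left hineq hApos.le]
      have : 0 ≤ pk / ((pk + pa) * A * (A + h * pk)) - pk' / ((pk' + pa) * A * (A + h * pk')) :=
        sub_nonneg.2 hfr
      positivity
  have := hmono (Set.left_mem_Icc.2 hpjle) (Set.right_mem_Icc.2 hpjle) hpjle
  simpa [hg] using this



/-- Theorem 1: given the MBS prices, the payoff `u_k` has increasing differences in
`(p_k, p_j)` on any rectangle where `γ_k · p_k ≥ p_a`. -/
theorem payoff_increasing_differences {K : ℕ} (hK : 1 ≤ K)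
    (W pa p0 : ℝ) (hW : 0 < W) (hpa : 0 < pa) (hp0 : 0 ≤ p0)
    (hff : Fin K → Fin K → ℝ) (h0f hf0 N lam pmax : Fin K → ℝ)
    (hhff : ∀ i j, 0 < hff i j) (hh0f : ∀ i, 0 < h0f i) (hhf0 : ∀ i, 0 < hf0 i)
    (hN : ∀ i, 0 < N i) (hlam : ∀ i, 0 ≤ lam i) (hpmax : ∀ i, 0 < pmax i)
    (k j : Fin K) (hjk : j ≠ k)
    (p : Fin K → ℝ) (hp : ∀ i, 0 ≤ p i ∧ p i ≤ pmax i)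
    (pk pk' pj pj' : ℝ)
    (hpk0 : 0 ≤ pk) (hpkmax : pk' ≤ pmax k) (hpkle : pk ≤ pk')
    (hpj0 : 0 ≤ pj) (hpjmax : pj' ≤ pmax j) (hpjle : pj ≤ pj')
    (hcond : ∀ x ∈ Set.Icc pk pk', ∀ y ∈ Set.Icc pj pj',
      pa ≤ sinr hff h0f N p0 k (Function.update (Function.update p k x) j y) * x) :
    payoff W pa p0 hff h0f hf0 N lam k (Function.update (Function.update p k pk') j pj') -
      payoff W pa p0 hff h0f hf0 N lam k (Function.update (Function.update p k pk) j pj') ≥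
    payoff W pa p0 hff h0f hf0 N lam k (Function.update (Function.update p k pk') j pj) -
      payoff W pa p0 hff h0f hf0 N lam k (Function.update (Function.update p k pk) j pj) := by
  set h : ℝ := hff k k with hh
  set b : ℝ := hff j k with hb
  set S : ℝ := ∑ i ∈ (Finset.univ.erase k).erase j, hff i k * p i with hS
  set D : ℝ := N k + h0f k * p0 + S with hD
  have hSpos : 0 ≤ S := Finset.sum_nonneg fun i _ => mul_nonneg (hhff i k).le (hp i).1
  have hDpos : 0 < D := by
    have := hN k; have := hh0f k; nlinarith
  have hhpos : 0 < h := hhff k k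
  have hbpos : 0 < b := hhff j k
  have hupk : ∀ x y : ℝ, (Function.update (Function.update p k x) j y) k = x := by
    intro x y
    rw [Function.update_of_ne (Ne.symm hjk), Function.update_self]
  have hsum : ∀ x y : ℝ,
      (∑ i ∈ Finset.univ.erase k, hff i k * (Function.update (Function.update p k x) j y) i)
        = b * y + S := by
    intro x y
    have hjmem : j ∈ Finset.univ.erase k := Finset.mem_erase.2 ⟨hjk, Finset.mem_univ j⟩
    rw [← Finset.add_sum_erase _ _ hjmem]
    congr 1
    · rw [Function.update_self]
    · apply Finset.sum_congr rfl
      intro i hi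
      have hij : i ≠ j := (Finset.mem_erase.1 hi).1
      have hik : i ≠ k := (Finset.mem_erase.1 (Finset.mem_erase.1 hi).2).1
      rw [Function.update_of_ne hij, Function.update_of_ne hik]
  have hsinr : ∀ x y : ℝ,
      sinr hff h0f N p0 k (Function.update (Function.update p k x) j y)
        = h * x / (D + b * y) := by
    intro x y
    unfold sinr
    rw [hupk, hsum]
    rw [hD, hh]
    ring_nf
  have hpay : ∀ x y : ℝ, 0 ≤ x → 0 ≤ y →
      payoff W pa p0 hff h0f hf0 N lam k (Function.update (Function.update p k x) j y)
        = W * (Real.log (D + b * y + h * x) - Real.log (D + b * y)) / (x + pa)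
          - lam k * hf0 k * x := by
    intro x y hx hy
    have hA : 0 < D + b * y := by positivity
    unfold payoff
    rw [hsinr, hupk]
    congr 2
    rw [show (1 : ℝ) + h * x / (D + b * y) = (D + b * y + h * x) / (D + b * y) by
      field_simp]
    rw [Real.log_div (by positivity) (by positivity)]
  have hpk'0 : 0 ≤ pk' := le_trans hpk0 hpkle
  have hpj'0 : 0 ≤ pj' := le_trans hpj0 hpjle
  have hcond' : ∀ y ∈ Set.Icc pj pj', pa * (D + b * y) ≤ h * pk ^ 2 := by
    intro y hy
    have hA : 0 < D + b * y := by have := le_trans hpj0 hy.1; positivity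
    have := hcond pk ⟨le_refl pk, hpkle⟩ y hy
    rw [hsinr] at this
    rw [div_mul_eq_mul_div, le_div_iff₀ hA] at this
    nlinarith
  rw [hpay pk' pj' hpk'0 hpj'0, hpay pk pj' hpk0 hpj'0, hpay pk' pj hpk'0 hpj0,
    hpay pk pj hpk0 hpj0]
  have := key_aux W pa h b D pk pk' pj pj' hW hpa hhpos hbpos hDpos hpk0 hpkle hpj0 hpjle hcond'
  linarith
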